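/- Let H(t,ξ) be the Zaremba Green function of the lower half-plane and let A > 0. Then there is a constant C (indeed C = 1 suffices) such that ∫₀^A |∂H/∂t₂ (t, ξ)| dt ≤ C for every complex number ξ, where ∂H/∂t₂ denotes the one-sided normal derivative from the lower half-plane at real t ∈ (0,A) and the (Lebesgue) integral ignores the at most one point t = ξ where the integrand is undefined. -/

import Mathlib

open Complex Real

/-- The branch angle in [-π, π): equals `Complex.arg` except that angle π is mapped to -π. -/
noncomputable def branchAngle (w : ℂ) : ℝ :=
  if Complex.arg w = Real.pi then -Real.pi else Complex.arg w

/-- Square root branch √w = √ρ e^{iθ/2} with θ ∈ [-π, π), and √0 = 0. -/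
noncomputable def zsqrt (w : ℂ) : ℂ :=
  (Real.sqrt (‖w‖) : ℂ) * Complex.exp (Complex.I * (branchAngle w / 2))

/-- The Zaremba Green function of the lower half-plane. -/
noncomputable def ZH (t ξ : ℂ) : ℝ :=
  -(1 / (2 * Real.pi)) *
    (Real.log (‖t - ξ‖) + Real.log (‖t - (starRingEnd ℂ) ξ‖)
      - 2 * Real.log (‖zsqrt t + zsqrt ξ‖)
      - 2 * Real.log (‖zsqrt t - zsqrt ((starRingEnd ℂ) ξ)‖))

/-- One-sided normal derivative of H from the lower half-plane at a real point t. -/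
noncomputable def ZHn (t : ℝ) (ξ : ℂ) : ℝ :=
  derivWithin (fun h : ℝ => ZH ((t : ℂ) + Complex.I * h) ξ) (Set.Iio 0) 0

lemma zsqrt_eq {z : ℂ} (hz : z ≠ 0) (h : Complex.arg z ≠ Real.pi) :
    zsqrt z = Complex.exp (Complex.log z / 2) := by
  have habs : 0 < ‖z‖ := norm_pos_iff.mpr hz
  rw [zsqrt, branchAngle, if_neg h, Complex.log]
  rw [show (↑(Real.log ‖z‖) + ↑(Complex.arg z) * Complex.I) / 2
      = (↑(Real.log ‖z‖ / 2) : ℂ) + Complex.I * ↑(Complex.arg z / 2) by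
    push_cast; ring]
  rw [Complex.exp_add]
  congr 1
  rw [← Complex.ofReal_exp]
  norm_cast
  rw [Real.sqrt_eq_rpow, Real.rpow_def_of_pos habs]
  ring_nf
  norm_cast

lemma zsqrt_real {t : ℝ} (ht : 0 ≤ t) : zsqrt (t : ℂ) = (Real.sqrt t : ℂ) := by
  have h0 : Complex.arg (t : ℂ) = 0 := Complex.arg_ofReal_of_nonneg ht
  rw [zsqrt, branchAngle, h0, if_neg (by exact fun hc => Real.pi_ne_zero hc.symm)]
  simp [abs_of_nonneg ht]

lemma zsqrt_conj {ξ : ℂ} (h : ξ.im ≠ 0) :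
    zsqrt ((starRingEnd ℂ) ξ) = (starRingEnd ℂ) (zsqrt ξ) := by
  have hπ : Complex.arg ξ ≠ Real.pi := fun hc => h (Complex.arg_eq_pi_iff.mp hc).2
  have hc : Complex.arg ((starRingEnd ℂ) ξ) = -Complex.arg ξ := by
    rw [Complex.arg_conj, if_neg hπ]
  have hπ2 : -Complex.arg ξ ≠ Real.pi := by
    have := Complex.neg_pi_lt_arg ξ; intro hcon; linarith
  rw [zsqrt, zsqrt, branchAngle, branchAngle, if_neg hπ, hc, if_neg hπ2]
  rw [map_mul, Complex.norm_conj]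
  congr 1
  · simp
  · rw [← Complex.exp_conj]
    congr 1
    simp only [map_mul, Complex.conj_I, map_div₀, Complex.conj_ofReal, map_ofNat]
    push_cast
    ring

lemma zsqrt_sq {z : ℂ} (hz : z ≠ 0) : (zsqrt z) ^ 2 = z := by
  have habs : 0 < ‖z‖ := norm_pos_iff.mpr hz
  have : (zsqrt z) ^ 2 = (‖z‖ : ℂ) * Complex.exp (Complex.I * branchAngle z) := by
    rw [zsqrt, mul_pow, ← Complex.exp_nat_mul]
    norm_cast
    rw [Real.sq_sqrt habs.le]
    congr 1
    push_cast
    ring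
  rw [this]
  have : Complex.exp (Complex.I * branchAngle z) = Complex.exp (Complex.I * Complex.arg z) := by
    rw [branchAngle]
    split_ifs with hc
    · rw [hc]
      push_cast
      rw [show Complex.I * -(Real.pi:ℂ) = -(Real.pi * Complex.I) by ring,
        show Complex.I * (Real.pi:ℂ) = Real.pi * Complex.I by ring,
        Complex.exp_neg, Complex.exp_pi_mul_I]
      norm_num
    · rfl
  rw [this, mul_comm Complex.I _, Complex.norm_mul_exp_arg_mul_I]

lemma uniq_Iio : UniqueDiffWithinAt ℝ (Set.Iio (0:ℝ)) 0 := by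
  apply uniqueDiffWithinAt_convex (convex_Iio 0)
  · rw [interior_Iio]; exact ⟨-1, by norm_num⟩
  · rw [closure_Iio]; exact Set.self_mem_Iic

set_option maxHeartbeats 2000000 in
lemma ZHn_formula {t : ℝ} (ht : 0 < t) {ξ : ℂ} (hξ : ξ.im ≠ 0) :
    ZHn t ξ = (zsqrt ξ).im / (2 * Real.pi * Real.sqrt t) *
      (1 / ((Real.sqrt t + (zsqrt ξ).re) ^ 2 + (zsqrt ξ).im ^ 2)
        + 1 / ((Real.sqrt t - (zsqrt ξ).re) ^ 2 + (zsqrt ξ).im ^ 2)) := by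
  have hξ0 : ξ ≠ 0 := fun hc => hξ (by simp [hc])
  set q : ℂ := zsqrt ξ with hq
  set a : ℝ := q.re
  set b : ℝ := q.im
  set s : ℝ := Real.sqrt t with hsdef
  have hs : 0 < s := Real.sqrt_pos.mpr ht
  have hts : (t : ℂ) = (s : ℂ) ^ 2 := by
    norm_cast; exact (Real.sq_sqrt ht.le).symm
  have hb : b ≠ 0 := by
    intro hb0
    have hsq : q ^ 2 = ξ := zsqrt_sq hξ0
    have : ξ.im = 2 * a * b := by
      rw [← hsq]; rw [sq]; simp [Complex.mul_im, a, b]; ring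
    rw [this, hb0] at hξ; simp at hξ
  -- the holomorphic potential
  set W : ℂ → ℂ := fun z => Complex.exp (Complex.log z / 2) with hW
  set Φ : ℂ → ℂ := fun z =>
    Complex.log (z - ξ) + Complex.log (z - (starRingEnd ℂ) ξ)
      - 2 * Complex.log (W z + q) - 2 * Complex.log (W z - (starRingEnd ℂ) q) with hΦdef
  -- Step A: pointwise identity
  have hA : ∀ h : ℝ, ZH ((t : ℂ) + Complex.I * h) ξ
      = -(1 / (2 * Real.pi)) * (Φ ((t : ℂ) + Complex.I * h)).re := by
    intro h
    set z : ℂ := (t : ℂ) + Complex.I * h with hz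
    have hzre : z.re = t := by simp [hz]
    have hz0 : z ≠ 0 := fun hc => by rw [hc] at hzre; simp at hzre; linarith
    have hzarg : Complex.arg z ≠ Real.pi := by
      intro hc
      have := (Complex.arg_eq_pi_iff.mp hc).1
      rw [hzre] at this; linarith
    have hzs : zsqrt z = W z := zsqrt_eq hz0 hzarg
    rw [ZH, hΦdef]
    rw [hzs, zsqrt_conj hξ, ← hq]
    simp only [Complex.sub_re, Complex.add_re, Complex.mul_re, Complex.log_re,
      Complex.re_ofNat, Complex.im_ofNat, Complex.log_im]
    ring
  -- slit plane facts
  have hmem : ∀ w : ℂ, w.im ≠ 0 → w ∈ Complex.slitPlane := fun w hw => Or.inr hw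
  have h1 : (t : ℂ) - ξ ∈ Complex.slitPlane := hmem _ (by simp [hξ])
  have h2 : (t : ℂ) - (starRingEnd ℂ) ξ ∈ Complex.slitPlane := hmem _ (by simp [hξ])
  have h3 : (t : ℂ) ∈ Complex.slitPlane := Or.inl (by simp [ht])
  have hWt : W (t : ℂ) = (s : ℂ) := by
    rw [hW]; exact (zsqrt_eq (by exact_mod_cast ne_of_gt ht) (by
      intro hc
      have := (Complex.arg_eq_pi_iff.mp hc).1
      simp at this; linarith)).symm.trans (zsqrt_real ht.le)
  have h4' : (s : ℂ) + q ∈ Complex.slitPlane := hmem _ (by simp [hb, b])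
  have h5' : (s : ℂ) - (starRingEnd ℂ) q ∈ Complex.slitPlane := by
    refine hmem _ ?_; simp [b] at hb ⊢; exact hb
  have h4 : W (t : ℂ) + q ∈ Complex.slitPlane := by rw [hWt]; exact h4'
  have h5 : W (t : ℂ) - (starRingEnd ℂ) q ∈ Complex.slitPlane := by rw [hWt]; exact h5'
  -- derivative of W
  set u : ℂ := ((2 * s : ℝ) : ℂ)⁻¹ with hu
  have hWd : HasDerivAt W u (t : ℂ) := by
    have h0 : HasDerivAt (fun z : ℂ => Complex.log z / 2) ((t:ℂ)⁻¹ / 2) (t : ℂ) := by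
      simpa using ((Complex.hasDerivAt_log h3).div_const 2)
    have := h0.cexp
    rw [← hW] at this
    refine this.congr_deriv ?_
    rw [show Complex.exp (Complex.log ↑t / 2) = W (t:ℂ) from rfl, hWt, hu, hts]
    have hs0 : (s:ℂ) ≠ 0 := by exact_mod_cast hs.ne'
    push_cast
    field_simp
  -- derivative of Φ
  set c : ℂ := ((t : ℂ) - ξ)⁻¹ + ((t : ℂ) - (starRingEnd ℂ) ξ)⁻¹
      - 2 * (u / ((s : ℂ) + q)) - 2 * (u / ((s : ℂ) - (starRingEnd ℂ) q)) with hc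
  have hΦd : HasDerivAt Φ c (t : ℂ) := by
    have d1 : HasDerivAt (fun z : ℂ => Complex.log (z - ξ)) (1 / ((t:ℂ) - ξ)) (t:ℂ) := by
      simpa using ((hasDerivAt_id ((t:ℂ))).sub_const ξ).clog h1
    have d2 : HasDerivAt (fun z : ℂ => Complex.log (z - (starRingEnd ℂ) ξ))
        (1 / ((t:ℂ) - (starRingEnd ℂ) ξ)) (t:ℂ) := by
      simpa using ((hasDerivAt_id ((t:ℂ))).sub_const ((starRingEnd ℂ) ξ)).clog h2
    have d3 : HasDerivAt (fun z : ℂ => Complex.log (W z + q)) (u / ((s:ℂ) + q)) (t:ℂ) := by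
      have := (hWd.add_const q).clog h4
      rwa [hWt] at this
    have d4 : HasDerivAt (fun z : ℂ => Complex.log (W z - (starRingEnd ℂ) q))
        (u / ((s:ℂ) - (starRingEnd ℂ) q)) (t:ℂ) := by
      have := (hWd.sub_const ((starRingEnd ℂ) q)).clog h5
      rwa [hWt] at this
    have := ((d1.add d2).sub ((d3.const_mul 2))).sub ((d4.const_mul 2))
    rw [hΦdef, hc]
    simp only [one_div] at this; exact this
  -- composition with h ↦ t + I h
  have hγ : HasDerivAt (fun h : ℝ => (t : ℂ) + Complex.I * (h : ℂ)) Complex.I 0 := by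
    have h0 : HasDerivAt (fun h : ℝ => (h : ℂ)) 1 0 := by
      have := Complex.ofRealCLM.hasDerivAt (x := (0:ℝ)); simp at this; exact this
    simpa using (h0.const_mul Complex.I).const_add ((t : ℂ))
  have hcomp : HasDerivAt (fun h : ℝ => Φ ((t : ℂ) + Complex.I * (h : ℂ))) (Complex.I * c) 0 := by
    have hfd := (hΦd.hasFDerivAt.restrictScalars ℝ)
    have h00 : ((t : ℂ) + Complex.I * ((0:ℝ) : ℂ)) = (t : ℂ) := by simp
    have h2 := hfd.comp_hasDerivAt_of_eq 0 hγ h00.symm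
    have hval : (ContinuousLinearMap.restrictScalars ℝ
        ((ContinuousLinearMap.smulRight (1 : ℂ →L[ℂ] ℂ) c))) Complex.I = Complex.I * c := by
      simp [smul_eq_mul]
    rw [← hval]
    exact h2
  have hre : HasDerivAt (fun h : ℝ => (Φ ((t : ℂ) + Complex.I * (h : ℂ))).re)
      ((Complex.I * c).re) 0 :=
    Complex.reCLM.hasFDerivAt.comp_hasDerivAt 0 hcomp
  have hfinal : HasDerivAt (fun h : ℝ => ZH ((t : ℂ) + Complex.I * h) ξ)
      (-(1 / (2 * Real.pi)) * (Complex.I * c).re) 0 := by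
    have heq : (fun h : ℝ => ZH ((t : ℂ) + Complex.I * h) ξ)
        = fun h : ℝ => -(1 / (2 * Real.pi)) * (Φ ((t : ℂ) + Complex.I * (h:ℂ))).re := funext hA
    rw [heq]
    exact hre.const_mul _
  have hZHn : ZHn t ξ = -(1 / (2 * Real.pi)) * (Complex.I * c).re := by
    rw [ZHn]
    exact hfinal.hasDerivWithinAt.derivWithin uniq_Iio
  rw [hZHn]
  -- now compute the real value
  have hIcre : (Complex.I * c).re = -c.im := by simp [Complex.mul_re]
  rw [hIcre]
  have hNz : ((t:ℂ) - ξ) ≠ 0 := Complex.slitPlane_ne_zero h1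
  have hN : Complex.normSq ((t:ℂ) - ξ) > 0 := Complex.normSq_pos.mpr hNz
  have hN' : Complex.normSq ((t:ℂ) - (starRingEnd ℂ) ξ) > 0 :=
    Complex.normSq_pos.mpr (Complex.slitPlane_ne_zero h2)
  have hb2 : 0 < b ^ 2 := lt_of_le_of_ne (sq_nonneg b) (Ne.symm (pow_ne_zero 2 hb))
  have hD1 : ((s + a) ^ 2 + b ^ 2) ≠ 0 := by nlinarith [sq_nonneg (s + a)]
  have hD2 : ((s - a) ^ 2 + b ^ 2) ≠ 0 := by nlinarith [sq_nonneg (s - a)]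
  have hcim : c.im = b / s * (1 / ((s + a) ^ 2 + b ^ 2) + 1 / ((s - a) ^ 2 + b ^ 2)) := by
    rw [hc, hu]
    have hq4 : ((s:ℂ) + q) ≠ 0 := Complex.slitPlane_ne_zero h4'
    have hq5 : ((s:ℂ) - (starRingEnd ℂ) q) ≠ 0 := Complex.slitPlane_ne_zero h5'
    simp only [Complex.add_im, Complex.sub_im, Complex.mul_im, Complex.mul_re,
      Complex.div_im, Complex.div_re, Complex.inv_im, Complex.inv_re,
      Complex.normSq_apply, Complex.add_re, Complex.sub_re,
      Complex.ofReal_re, Complex.ofReal_im, Complex.conj_re, Complex.conj_im,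
      Complex.re_ofNat, Complex.im_ofNat]
    have him2 : 0 < ξ.im * ξ.im := mul_self_pos.mpr hξ
    have hbb : 0 < b * b := mul_self_pos.mpr hb
    have hNr : ((t - ξ.re) * (t - ξ.re) + ξ.im * ξ.im) ≠ 0 := by
      nlinarith [mul_self_nonneg (t - ξ.re)]
    have hD1r : ((s + a) * (s + a) + b * b) ≠ 0 := by
      nlinarith [mul_self_nonneg (s + a)]
    have hD2r : ((s - a) * (s - a) + b * b) ≠ 0 := by
      nlinarith [mul_self_nonneg (s - a)]
    have h2s : (2 * s) ≠ 0 := by positivity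
    rw [show (0 - -ξ.im) * (0 - -ξ.im) = (0 - ξ.im) * (0 - ξ.im) by ring]
    rw [show q.re = a from rfl, show q.im = b from rfl]
    simp only [zero_sub, sub_zero, zero_add, neg_neg, neg_zero, zero_div, mul_zero, add_zero, zero_mul, neg_mul_neg]
    field_simp
    ring
  rw [hcim]
  field_simp

lemma ZH_eq_zero {ξ : ℂ} (hξ : ξ.im = 0) {z : ℂ} (hz : 0 < z.re) (hne : z ≠ ξ) :
    ZH z ξ = 0 := by
  have hz0 : z ≠ 0 := fun hc => by rw [hc] at hz; simp at hz
  have hcξ : (starRingEnd ℂ) ξ = ξ := Complex.conj_eq_iff_im.mpr hξ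
  set p : ℂ := zsqrt z
  set q : ℂ := zsqrt ξ
  have hq2 : q ^ 2 = ξ := by
    by_cases h0 : ξ = 0
    · simp [q, h0, zsqrt]
    · exact zsqrt_sq h0
  have hp2 : p ^ 2 = z := zsqrt_sq hz0
  have hfact : (p + q) * (p - q) = z - ξ := by
    rw [← hp2, ← hq2]; ring
  have hzξ : z - ξ ≠ 0 := sub_ne_zero.mpr hne
  have hpq1 : p + q ≠ 0 := fun hc => hzξ (by rw [← hfact, hc, zero_mul])
  have hpq2 : p - q ≠ 0 := fun hc => hzξ (by rw [← hfact, hc, mul_zero])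
  have habs : ‖z - ξ‖ = ‖p + q‖ * ‖p - q‖ := by
    rw [← hfact, norm_mul]
  have hlog : Real.log (‖z - ξ‖)
      = Real.log (‖p + q‖) + Real.log (‖p - q‖) := by
    rw [habs, Real.log_mul (by simpa [sub_eq_zero] using hpq1) (by simpa [sub_eq_zero] using hpq2)]
  rw [ZH, hcξ, hlog]
  ring

lemma ZHn_zero {ξ : ℂ} (hξ : ξ.im = 0) {t : ℝ} (ht : 0 < t) (hne : t ≠ ξ.re) :
    ZHn t ξ = 0 := by
  have heq : (fun h : ℝ => ZH ((t : ℂ) + Complex.I * h) ξ) = fun _ : ℝ => (0:ℝ) := by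
    funext h
    apply ZH_eq_zero hξ
    · simp [ht]
    · intro hc
      apply hne
      have := congrArg Complex.re hc
      simpa using this
  rw [ZHn, heq]
  exact congrFun (derivWithin_fun_const _ _) _

/-- For A > 0 there is a constant C (indeed C = 1 suffices) such that
∫₀^A |∂H/∂t₂(t,ξ)| dt ≤ C for every complex ξ. -/
theorem zaremba_green_normal_derivative_integral_bound (A : ℝ) (hA : 0 < A) :
    ∃ C : ℝ, C = 1 ∧ ∀ ξ : ℂ, (∫ t in (0:ℝ)..A, |ZHn t ξ|) ≤ C := by
  refine ⟨1, rfl, fun ξ => ?_⟩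
  by_cases hξ : ξ.im = 0
  · -- real case: integrand vanishes a.e.
    have h0 : ∫ t in (0:ℝ)..A, |ZHn t ξ| = ∫ t in (0:ℝ)..A, (0:ℝ) := by
      apply intervalIntegral.integral_congr_ae
      have hae : ∀ᵐ x : ℝ, x ≠ ξ.re := by
        rw [MeasureTheory.ae_iff]
        have : {x : ℝ | ¬x ≠ ξ.re} = {ξ.re} := by ext x; simp
        rw [this]
        exact Real.volume_singleton
      filter_upwards [hae] with x hx hmem
      rw [ZHn_zero hξ (by rw [Set.uIoc_of_le hA.le] at hmem; exact hmem.1) hx]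
      simp
    rw [h0]
    simp
  · -- main case: Im ξ ≠ 0
    have hξ0 : ξ ≠ 0 := fun hc => hξ (by simp [hc])
    set a : ℝ := (zsqrt ξ).re with ha
    set b : ℝ := (zsqrt ξ).im with hbdef
    have hb : b ≠ 0 := by
      have hsq : (zsqrt ξ) ^ 2 = ξ := zsqrt_sq hξ0
      intro hb0
      have h2ab : ξ.im = 2 * a * b := by
        rw [← hsq, sq]; simp [Complex.mul_im, a, b]; ring
      rw [h2ab, hb0] at hξ; simp at hξ
    set cb : ℝ := |b| with hcb
    have hcb0 : 0 < cb := abs_pos.mpr hb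
    have hπ : 0 < Real.pi := Real.pi_pos
    set g : ℝ → ℝ := fun t => cb / (2 * Real.pi * Real.sqrt t) *
      (1 / ((Real.sqrt t + a) ^ 2 + cb ^ 2) + 1 / ((Real.sqrt t - a) ^ 2 + cb ^ 2)) with hg
    set G : ℝ → ℝ := fun t => (1 / Real.pi) *
      (Real.arctan ((Real.sqrt t + a) / cb) + Real.arctan ((Real.sqrt t - a) / cb)) with hG
    -- derivative of G
    have hG' : ∀ x ∈ Set.Ioo (0:ℝ) A, HasDerivAt G (g x) x := by
      intro x hx
      have hx0 : 0 < x := hx.1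
      have hsx : 0 < Real.sqrt x := Real.sqrt_pos.mpr hx0
      have h1 : HasDerivAt (fun t : ℝ => (Real.sqrt t + a) / cb)
          ((1 / (2 * Real.sqrt x)) / cb) x :=
        ((Real.hasDerivAt_sqrt hx0.ne').add_const a).div_const cb
      have h1' : HasDerivAt (fun t : ℝ => (Real.sqrt t - a) / cb)
          ((1 / (2 * Real.sqrt x)) / cb) x :=
        ((Real.hasDerivAt_sqrt hx0.ne').sub_const a).div_const cb
      have h2 := (Real.hasDerivAt_arctan ((Real.sqrt x + a) / cb)).comp x h1
      have h3 := (Real.hasDerivAt_arctan ((Real.sqrt x - a) / cb)).comp x h1'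
      have h4 := (h2.add h3).const_mul (1 / Real.pi)
      refine h4.congr_deriv (Eq.symm ?_)
      rw [hg]
      have hD1 : ((Real.sqrt x + a) ^ 2 + cb ^ 2) ≠ 0 := by positivity
      have hD2 : ((Real.sqrt x - a) ^ 2 + cb ^ 2) ≠ 0 := by positivity
      have hE1 : (1 + ((Real.sqrt x + a) / cb) ^ 2) ≠ 0 := by positivity
      have hE2 : (1 + ((Real.sqrt x - a) / cb) ^ 2) ≠ 0 := by positivity
      show _ = (1 / Real.pi) * (1 / (1 + ((Real.sqrt x + a) / cb) ^ 2) * (1 / (2 * Real.sqrt x) / cb)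
        + 1 / (1 + ((Real.sqrt x - a) / cb) ^ 2) * (1 / (2 * Real.sqrt x) / cb))
      field_simp
      ring
    -- continuity of G
    have hGc : ContinuousOn G (Set.Icc 0 A) := by
      apply Continuous.continuousOn
      rw [hG]
      exact continuous_const.mul ((Real.continuous_arctan.comp
        ((Real.continuous_sqrt.add continuous_const).div_const cb)).add
        (Real.continuous_arctan.comp ((Real.continuous_sqrt.sub continuous_const).div_const cb)))
    -- interval integrability of g
    have hbnd : IntervalIntegrable (fun x : ℝ => (1 / (Real.pi * cb)) * x ^ (-(1:ℝ)/2))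
        MeasureTheory.volume 0 A :=
      (intervalIntegral.intervalIntegrable_rpow' (by norm_num)).const_mul _
    have hgcont : ContinuousOn g (Set.Ioc 0 A) := by
      rw [hg]
      refine ContinuousOn.mul (ContinuousOn.div continuousOn_const
        (continuousOn_const.mul Real.continuous_sqrt.continuousOn) ?_)
        (ContinuousOn.add (ContinuousOn.div continuousOn_const ?_ ?_)
          (ContinuousOn.div continuousOn_const ?_ ?_))
      · intro x hx
        have : 0 < Real.sqrt x := Real.sqrt_pos.mpr hx.1
        positivity
      · exact ContinuousOn.add (ContinuousOn.pow
          (Real.continuous_sqrt.continuousOn.add continuousOn_const) 2) continuousOn_const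
      · intro x hx; positivity
      · exact ContinuousOn.add (ContinuousOn.pow
          (Real.continuous_sqrt.continuousOn.sub continuousOn_const) 2) continuousOn_const
      · intro x hx; positivity
    have hint : IntervalIntegrable g MeasureTheory.volume 0 A := by
      apply hbnd.mono_fun'
      · rw [Set.uIoc_of_le hA.le]
        exact hgcont.aestronglyMeasurable measurableSet_Ioc
      · rw [Set.uIoc_of_le hA.le]
        filter_upwards [MeasureTheory.ae_restrict_mem measurableSet_Ioc] with x hx
        have hx0 : 0 < x := hx.1
        have hsx : 0 < Real.sqrt x := Real.sqrt_pos.mpr hx0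
        have hrpow : x ^ (-(1:ℝ)/2) = (Real.sqrt x)⁻¹ := by
          rw [show (-(1:ℝ)/2) = -(1/2) by norm_num, Real.rpow_neg hx0.le, Real.sqrt_eq_rpow]
        have hgpos : 0 ≤ g x := by
          rw [hg]; positivity
        rw [Real.norm_eq_abs, _root_.abs_of_nonneg hgpos, hg, hrpow]
        have e1 : 1 / ((Real.sqrt x + a) ^ 2 + cb ^ 2) ≤ 1 / cb ^ 2 := by
          apply one_div_le_one_div_of_le (by positivity)
          nlinarith [sq_nonneg (Real.sqrt x + a)]
        have e2 : 1 / ((Real.sqrt x - a) ^ 2 + cb ^ 2) ≤ 1 / cb ^ 2 := by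
          apply one_div_le_one_div_of_le (by positivity)
          nlinarith [sq_nonneg (Real.sqrt x - a)]
        calc cb / (2 * Real.pi * Real.sqrt x) *
              (1 / ((Real.sqrt x + a) ^ 2 + cb ^ 2) + 1 / ((Real.sqrt x - a) ^ 2 + cb ^ 2))
            ≤ cb / (2 * Real.pi * Real.sqrt x) * (1 / cb ^ 2 + 1 / cb ^ 2) := by
              apply mul_le_mul_of_nonneg_left (add_le_add e1 e2) (by positivity)
          _ = 1 / (Real.pi * cb) * (Real.sqrt x)⁻¹ := by
              field_simp
              ring
    -- FTC
    have hFTC : ∫ t in (0:ℝ)..A, g t = G A - G 0 :=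
      intervalIntegral.integral_eq_sub_of_hasDeriv_right_of_le hA.le hGc
        (fun x hx => (hG' x hx).hasDerivWithinAt) hint
    -- the integrand equals g on (0, A]
    have hcongr : ∫ t in (0:ℝ)..A, |ZHn t ξ| = ∫ t in (0:ℝ)..A, g t := by
      apply intervalIntegral.integral_congr_ae
      filter_upwards with x hmem
      rw [Set.uIoc_of_le hA.le] at hmem
      have hx0 : 0 < x := hmem.1
      have hsx : 0 < Real.sqrt x := Real.sqrt_pos.mpr hx0
      have hS : 0 < 1 / ((Real.sqrt x + a) ^ 2 + b ^ 2) + 1 / ((Real.sqrt x - a) ^ 2 + b ^ 2) := by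
        have hb2 : 0 < b ^ 2 := lt_of_le_of_ne (sq_nonneg b) (Ne.symm (pow_ne_zero 2 hb))
        have : 0 < (Real.sqrt x + a) ^ 2 + b ^ 2 := by nlinarith [sq_nonneg (Real.sqrt x + a)]
        have : 0 < (Real.sqrt x - a) ^ 2 + b ^ 2 := by nlinarith [sq_nonneg (Real.sqrt x - a)]
        positivity
      rw [ZHn_formula hx0 hξ, ← ha, ← hbdef, hg]
      rw [abs_mul, _root_.abs_of_pos hS, abs_div, _root_.abs_of_pos (by positivity : (0:ℝ) < 2 * Real.pi * Real.sqrt x)]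
      rw [show |b| = cb from rfl, show b ^ 2 = cb ^ 2 from (_root_.sq_abs b).symm]
    rw [hcongr, hFTC]
    have hG0 : G 0 = 0 := by
      rw [hG]
      simp [Real.sqrt_zero, zero_sub, neg_div, Real.arctan_neg]
    rw [hG0, sub_zero, hG]
    have k1 := Real.arctan_lt_pi_div_two ((Real.sqrt A + a) / cb)
    have k2 := Real.arctan_lt_pi_div_two ((Real.sqrt A - a) / cb)
    have hsum : Real.arctan ((Real.sqrt A + a) / cb) + Real.arctan ((Real.sqrt A - a) / cb)
        ≤ Real.pi := by linarith
    have := mul_le_mul_of_nonneg_left hsum (le_of_lt (one_div_pos.mpr hπ))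
    calc (1 / Real.pi) * (Real.arctan ((Real.sqrt A + a) / cb)
          + Real.arctan ((Real.sqrt A - a) / cb)) ≤ (1 / Real.pi) * Real.pi := this
      _ = 1 := by field_simp
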